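/- Let F : ℝ³ → ℝ be differentiable and λ : ℝ³ → ℝ be continuously differentiable, and suppose that F_a + F_b·λ + F_c·λ² = 0 identically on ℝ³ (λ is a characteristic speed of F) and that λ_a + λ·λ_b + λ²·λ_c = 0 identically on ℝ³ (the complete exceptionality condition). Then every characteristic of F is strong: for every A₀ ∈ ℝ³ with F(A₀) = 0 and every t ∈ ℝ, F(A₀ + t·(1, λ(A₀), λ(A₀)²)) = 0, i.e., the entire characteristic line through any point of the zero set of F is contained in the zero set of F. -/

import Mathlib

/-- The partial derivative of `G : ℝ³ → ℝ` in the constant direction `v`. -/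
noncomputable def pd (v : ℝ × ℝ × ℝ) (G : ℝ × ℝ × ℝ → ℝ) : ℝ × ℝ × ℝ → ℝ :=
  fun p => fderiv ℝ G p v

/-- Direction of the variable `a`. -/
def ea : ℝ × ℝ × ℝ := (1, 0, 0)
/-- Direction of the variable `b`. -/
def eb : ℝ × ℝ × ℝ := (0, 1, 0)
/-- Direction of the variable `c`. -/
def ec : ℝ × ℝ × ℝ := (0, 0, 1)


lemma clm_apply (L : (ℝ × ℝ × ℝ) →L[ℝ] ℝ) (x y z : ℝ) :
    L (x, y, z) = x * L ea + y * L eb + z * L ec := by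
  have h : (x, y, z) = x • ea + y • eb + z • ec := by
    simp [ea, eb, ec, Prod.ext_iff]
  rw [h, map_add, map_add, map_smul, map_smul, map_smul, smul_eq_mul, smul_eq_mul, smul_eq_mul]

theorem completely_exceptional_implies_strong_characteristics
    (F lam : ℝ × ℝ × ℝ → ℝ)
    (hF : Differentiable ℝ F) (hlam : ContDiff ℝ 1 lam)
    (hchar : ∀ p, pd ea F p + pd eb F p * lam p + pd ec F p * lam p ^ 2 = 0)
    (hCE : ∀ p, pd ea lam p + lam p * pd eb lam p + lam p ^ 2 * pd ec lam p = 0) :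
    ∀ A₀ : ℝ × ℝ × ℝ, F A₀ = 0 → ∀ t : ℝ,
      F (A₀ + t • ((1 : ℝ), lam A₀, lam A₀ ^ 2)) = 0 := by
  intro A₀ hF0 t
  set l0 := lam A₀ with hl0
  set v : ℝ × ℝ × ℝ := (1, l0, l0 ^ 2) with hv
  set p : ℝ → ℝ × ℝ × ℝ := fun s => A₀ + s • v with hp
  have hline : ∀ s : ℝ, HasDerivAt p v s := by
    intro s
    simpa [hp] using ((hasDerivAt_id s).smul_const v).const_add A₀
  have hlamdiff : Differentiable ℝ lam := hlam.differentiable one_ne_zero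
  -- derivative of lam along the line
  have hgd : ∀ s, HasDerivAt (fun u => lam (p u)) (fderiv ℝ lam (p s) v) s := by
    intro s
    exact ((hlamdiff (p s)).hasFDerivAt).comp_hasDerivAt s (hline s)
  set c : ℝ → ℝ := fun s => fderiv ℝ lam (p s) eb + (l0 + lam (p s)) * fderiv ℝ lam (p s) ec
    with hcdef
  have hcont_fderiv : Continuous (fun q => fderiv ℝ lam q) := hlam.continuous_fderiv one_ne_zero
  have hpc : Continuous p := by continuity
  have hc : Continuous c := by
    apply Continuous.add
    · exact (hcont_fderiv.comp hpc).clm_apply continuous_const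
    · exact (continuous_const.add (hlamdiff.continuous.comp hpc)).mul
        ((hcont_fderiv.comp hpc).clm_apply continuous_const)
  have hgd' : ∀ s, HasDerivAt (fun u => lam (p u)) (-(c s) * (lam (p s) - l0)) s := by
    intro s
    have h1 := hgd s
    have h2 := hCE (p s)
    simp only [pd] at h2
    have h3 : fderiv ℝ lam (p s) v = -(c s) * (lam (p s) - l0) := by
      rw [hv, clm_apply]
      simp only [hcdef]
      nlinarith [h2]
    rwa [h3] at h1
  set C : ℝ → ℝ := fun s => ∫ u in (0:ℝ)..s, c u with hC
  have hCd : ∀ s, HasDerivAt C (c s) s := fun s =>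
    (hc.integral_hasStrictDerivAt 0 s).hasDerivAt
  have hprod : ∀ s, HasDerivAt (fun u => (lam (p u) - l0) * Real.exp (C u)) 0 s := by
    intro s
    have h1 : HasDerivAt (fun u => (lam (p u) - l0) * Real.exp (C u)) _ s :=
      ((hgd' s).sub_const l0).mul ((hCd s).exp)
    convert h1 using 1
    ring
  have hconstlam : ∀ s, lam (p s) = l0 := by
    intro s
    have hd : Differentiable ℝ (fun u => (lam (p u) - l0) * Real.exp (C u)) :=
      fun u => (hprod u).differentiableAt
    have hz : ∀ u, deriv (fun u => (lam (p u) - l0) * Real.exp (C u)) u = 0 :=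
      fun u => (hprod u).deriv
    have key := is_const_of_deriv_eq_zero hd hz s 0
    have h0 : lam (p 0) = l0 := by simp [hp, hl0]
    rw [h0, sub_self, zero_mul] at key
    rcases mul_eq_zero.mp key with h | h
    · exact sub_eq_zero.mp h
    · exact absurd h (Real.exp_ne_zero _)
  -- now F along the line
  have hFd : ∀ s, HasDerivAt (fun u => F (p u)) 0 s := by
    intro s
    have h1 : HasDerivAt (fun u => F (p u)) (fderiv ℝ F (p s) v) s :=
      ((hF (p s)).hasFDerivAt).comp_hasDerivAt s (hline s)
    have h2 := hchar (p s)
    simp only [pd] at h2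
    have h3 : fderiv ℝ F (p s) v = 0 := by
      rw [hv, clm_apply]
      rw [← hconstlam s] at *
      nlinarith [h2]
    rwa [h3] at h1
  have hFconst : F (p t) = F (p 0) :=
    is_const_of_deriv_eq_zero (fun u => (hFd u).differentiableAt)
      (fun u => (hFd u).deriv) t 0
  simp only [hp] at hFconst
  simpa [hF0] using hFconst
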